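/- Let 0 < λ₁ < λ₂ and let α, β ∈ ℝ with α² + β² = 1. Then (α²λ₁ + β²λ₂)(α² − β²)(λ₂ − λ₁) − α²β²(λ₂ − λ₁)² = 0 if and only if α² = √λ₂ / (√λ₁ + √λ₂) and β² = √λ₁ / (√λ₁ + √λ₂). (Hence, when the Cauchy–Green eigenvalues are distinct, the boundary term of the first variation of the averaged Lagrangian shear vanishes exactly when the endpoint tangent is a shear vector r′ = ±√(√λ₂/(√λ₁+√λ₂)) ξ₁ ± √(√λ₁/(√λ₁+√λ₂)) ξ₂.) -/

import Mathlib

/-- For `0 < λ₁ < λ₂` and a unit vector with coordinates `(α, β)`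
in the Cauchy–Green eigenbasis, the boundary-term numerator
`(α²λ₁+β²λ₂)(α²−β²)(λ₂−λ₁) − α²β²(λ₂−λ₁)²` vanishes iff
`α² = √λ₂/(√λ₁+√λ₂)` and `β² = √λ₁/(√λ₁+√λ₂)` (the shear-vector directions). -/
theorem boundary_term_vanishes_iff_shear_vector (lam₁ lam₂ : ℝ)
    (h₁ : 0 < lam₁) (h₁₂ : lam₁ < lam₂) (α β : ℝ) (hunit : α ^ 2 + β ^ 2 = 1) :
    (α ^ 2 * lam₁ + β ^ 2 * lam₂) * (α ^ 2 - β ^ 2) * (lam₂ - lam₁)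
        - α ^ 2 * β ^ 2 * (lam₂ - lam₁) ^ 2 = 0
      ↔ α ^ 2 = Real.sqrt lam₂ / (Real.sqrt lam₁ + Real.sqrt lam₂)
        ∧ β ^ 2 = Real.sqrt lam₁ / (Real.sqrt lam₁ + Real.sqrt lam₂) := by
  set s₁ := Real.sqrt lam₁ with hs₁def
  set s₂ := Real.sqrt lam₂ with hs₂def
  have hs₁ : s₁ ^ 2 = lam₁ := Real.sq_sqrt h₁.le
  have hs₂ : s₂ ^ 2 = lam₂ := Real.sq_sqrt (h₁.trans h₁₂).le
  have hs₁pos : 0 < s₁ := Real.sqrt_pos.mpr h₁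
  have hs₂pos : 0 < s₂ := Real.sqrt_pos.mpr (h₁.trans h₁₂)
  have hlt : s₁ < s₂ := Real.sqrt_lt_sqrt h₁.le h₁₂
  have hsum : s₁ + s₂ ≠ 0 := by positivity
  have hd : 0 < lam₂ - lam₁ := by linarith
  constructor
  · intro h
    have hb : β ^ 2 = 1 - α ^ 2 := by linarith
    have key : ((s₂ - s₁) * α ^ 2 - s₂) * ((s₂ + s₁) * α ^ 2 - s₂) = 0 := by
      have h' : (lam₂ - lam₁) * ((lam₂ - lam₁) * α ^ 4 - 2 * lam₂ * α ^ 2 + lam₂)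
          = 0 := by
        linear_combination (-1) * h - (lam₂ - lam₁) * lam₂ * (1 - α ^ 2 + β ^ 2) * hb
      have h'' : (lam₂ - lam₁) * α ^ 4 - 2 * lam₂ * α ^ 2 + lam₂ = 0 := by
        rcases mul_eq_zero.mp h' with h0 | h0
        · linarith
        · exact h0
      linear_combination h'' + (α ^ 4 - 2 * α ^ 2 + 1) * hs₂ - α ^ 4 * hs₁
    have hneg : (s₂ - s₁) * α ^ 2 - s₂ < 0 := by
      have hle : α ^ 2 ≤ 1 := by nlinarith [sq_nonneg β]
      nlinarith
    have hfac : (s₂ + s₁) * α ^ 2 - s₂ = 0 := by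
      rcases mul_eq_zero.mp key with h0 | h0
      · exact absurd h0 (ne_of_lt hneg)
      · exact h0
    have ha : α ^ 2 = s₂ / (s₁ + s₂) := by
      field_simp
      linarith [hfac]
    refine ⟨ha, ?_⟩
    rw [hb, ha]
    field_simp
    ring
  · rintro ⟨ha, hb⟩
    rw [ha, hb]
    have h1 : s₁ * s₁ = lam₁ := by nlinarith [hs₁]
    have h2 : s₂ * s₂ = lam₂ := by nlinarith [hs₂]
    field_simp
    linear_combination (lam₁ * lam₂ - lam₁ ^ 2) * hs₂ + (lam₁ * lam₂ - lam₂ ^ 2) * hs₁
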